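/- Let c_n = W_n β^{n-1} for n ≥ 1, where (W_n) is any sequence of reals and β ∈ ℝ. Then the moment sequence defined by the free moment-cumulant relation m_n = Σ_{π ∈ NC(n)} ∏_{V ∈ π} c_{|V|} equals m_n = Σ_{j=1}^n Σ_{b₁+⋯+b_j=n, b₁≥⋯≥b_j≥1} [n(n-1)⋯(n-j+2)/f(b₁,…,b_j)] ∏_{r=1}^j W_{b_r} β^{b_r - 1}. -/

import Mathlib

open scoped Classical

/-- A partition of the totally ordered set `Fin n` is noncrossing. -/
def IsNoncrossing {n : ℕ} (P : Finpartition (Finset.univ : Finset (Fin n))) : Prop :=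
  ¬ ∃ p₁ q₁ p₂ q₂ : Fin n, p₁ < q₁ ∧ q₁ < p₂ ∧ p₂ < q₂ ∧
      ∃ B ∈ P.parts, ∃ C ∈ P.parts, B ≠ C ∧ p₁ ∈ B ∧ p₂ ∈ B ∧ q₁ ∈ C ∧ q₂ ∈ C

/-- `f(b₁,…,b_j) = ∏_{k ≥ 1} n_k!` where `n_k` is the multiplicity of `k`. -/
def fMult (m : Multiset ℕ) : ℕ := m.toFinset.prod fun k => (m.count k).factorial

open Fin.NatCast

namespace KrewerasAux

open Finset

/-! ### Prefix sums and the "last candidate" function -/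

/-- Prefix sum of a sequence. -/
def pre (t : ℕ → ℕ) (i : ℕ) : ℕ := ∑ k ∈ Finset.range i, t k

/-- `Qc t i m` says the interval sum over `[m, i]` is at least `i - m + 1`. -/
def Qc (t : ℕ → ℕ) (i m : ℕ) : Prop := pre t m + (i + 1) ≤ pre t (i + 1) + m

instance (t : ℕ → ℕ) (i m : ℕ) : Decidable (Qc t i m) :=
  inferInstanceAs (Decidable (_ ≤ _))

def cands (t : ℕ → ℕ) (i : ℕ) : Finset ℕ := (Finset.range (i + 1)).filter (Qc t i)

/-- The largest `m ≤ i` such that the interval sum over `[m,i]` is ≥ `i - m + 1`. -/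
def Gf (t : ℕ → ℕ) (i : ℕ) : ℕ := ((cands t i).max).getD 0

/-- Integer height function. -/
def Zh (t : ℕ → ℕ) (m : ℕ) : ℤ := (pre t m : ℤ) - m

lemma pre_succ (t : ℕ → ℕ) (i : ℕ) : pre t (i + 1) = pre t i + t i :=
  Finset.sum_range_succ t i

lemma pre_mono (t : ℕ → ℕ) {a b : ℕ} (h : a ≤ b) : pre t a ≤ pre t b :=
  Finset.sum_le_sum_of_subset (Finset.range_subset_range.2 h)

lemma Qc_iff_Zh (t : ℕ → ℕ) (i m : ℕ) : Qc t i m ↔ Zh t m ≤ Zh t (i + 1) := by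
  unfold Qc Zh; push_cast; omega

lemma Gf_mem {t : ℕ → ℕ} {i : ℕ} (h : (cands t i).Nonempty) : Gf t i ∈ cands t i := by
  obtain ⟨a, ha⟩ := Finset.max_of_nonempty h
  have : Gf t i = a := by rw [Gf, ha]; rfl
  rw [this]; exact Finset.mem_of_max ha

lemma le_Gf {t : ℕ → ℕ} {i m : ℕ} (hm : m ∈ cands t i) : m ≤ Gf t i := by
  obtain ⟨a, ha⟩ := Finset.max_of_nonempty ⟨m, hm⟩
  have h2 : Gf t i = a := by rw [Gf, ha]; rfl
  have := Finset.le_max hm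
  rw [ha] at this
  rw [h2]; exact_mod_cast this

lemma mem_cands {t : ℕ → ℕ} {i m : ℕ} : m ∈ cands t i ↔ m ≤ i ∧ Qc t i m := by
  simp [cands, Nat.lt_succ_iff]

lemma Gf_le {t : ℕ → ℕ} {i : ℕ} (h : (cands t i).Nonempty) : Gf t i ≤ i :=
  (mem_cands.1 (Gf_mem h)).1

lemma Gf_Q {t : ℕ → ℕ} {i : ℕ} (h : (cands t i).Nonempty) : Qc t i (Gf t i) :=
  (mem_cands.1 (Gf_mem h)).2

lemma Gf_max {t : ℕ → ℕ} {i m : ℕ} (h1 : Gf t i < m) (h2 : m ≤ i) : ¬ Qc t i m := by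
  intro hQ
  exact absurd (le_Gf (mem_cands.2 ⟨h2, hQ⟩)) (not_le.2 h1)

lemma Zh_succ (t : ℕ → ℕ) (i : ℕ) : Zh t (i + 1) = Zh t i + t i - 1 := by
  unfold Zh; rw [pre_succ]; push_cast; ring

/-- `t` is nonzero at `Gf t i`. -/
lemma Gf_pos {t : ℕ → ℕ} {i : ℕ} (h : (cands t i).Nonempty) : t (Gf t i) ≠ 0 := by
  intro h0
  have hQ := Gf_Q h
  have hle := Gf_le h
  rcases eq_or_lt_of_le hle with heq | hlt
  · have hps := pre_succ t i
    rw [heq] at h0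
    unfold Qc at hQ
    rw [heq] at hQ
    omega
  · have hs : pre t (Gf t i + 1) = pre t (Gf t i) := by simp [pre_succ, h0]
    have hQ' : Qc t i (Gf t i + 1) := by unfold Qc at hQ ⊢; omega
    exact absurd (le_Gf (mem_cands.2 ⟨hlt, hQ'⟩)) (by omega)

lemma Gf_self {t : ℕ → ℕ} {m : ℕ} (h : t m ≠ 0) : Gf t m = m := by
  have hmem : m ∈ cands t m := by
    refine mem_cands.2 ⟨le_rfl, ?_⟩
    unfold Qc
    rw [pre_succ]
    omega
  exact le_antisymm (Gf_le ⟨m, hmem⟩) (le_Gf hmem)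

lemma cands_nonempty {t : ℕ → ℕ} {i : ℕ} (h : i + 1 ≤ pre t (i + 1)) :
    (cands t i).Nonempty := by
  refine ⟨0, mem_cands.2 ⟨Nat.zero_le _, ?_⟩⟩
  have h0 : pre t 0 = 0 := rfl
  unfold Qc; omega

/-! ### The partition associated to a sequence -/

variable {n : ℕ}

/-- The setoid on `Fin n` identifying elements with the same `Gf` value. -/
def GS (t : ℕ → ℕ) (n : ℕ) : Setoid (Fin n) :=
  ⟨fun a b => Gf t a.1 = Gf t b.1, ⟨fun _ => rfl, Eq.symm, Eq.trans⟩⟩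

instance (t : ℕ → ℕ) (n : ℕ) : DecidableRel (GS t n).r :=
  fun a b => inferInstanceAs (Decidable (Gf t a.1 = Gf t b.1))

/-- The partition of `Fin n` into fibers of `Gf t`. -/
def Pa (t : ℕ → ℕ) (n : ℕ) : Finpartition (Finset.univ : Finset (Fin n)) :=
  Finpartition.ofSetoid (GS t n)

lemma mem_Pa_part {t : ℕ → ℕ} {i x : Fin n} :
    x ∈ (Pa t n).part i ↔ Gf t x.1 = Gf t i.1 := by
  rw [Pa, Finpartition.mem_part_ofSetoid_iff_rel]
  exact ⟨Eq.symm, Eq.symm⟩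

/-- Hypotheses bundle on the sequence `t`. -/
structure Good (t : ℕ → ℕ) (n : ℕ) : Prop where
  supp : ∀ k, n ≤ k → t k = 0
  total : pre t n = n
  dom : ∀ i, i ≤ n → i ≤ pre t i

lemma card_band {n : ℕ} {a b : ℕ} (hb : b ≤ n) :
    ((Finset.univ : Finset (Fin n)).filter (fun x => a ≤ x.1 ∧ x.1 < b)).card = b - a := by
  rw [← Nat.card_Ico a b]
  apply Finset.card_bij (fun x _ => x.1)
  · intro x hx; simp only [mem_filter, mem_univ, true_and] at hx
    simp only [Finset.mem_Ico]; omega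
  · intro x _ y _ h; exact Fin.ext h
  · intro k hk
    simp only [Finset.mem_Ico] at hk
    exact ⟨⟨k, lt_of_lt_of_le hk.2 hb⟩, by simp [hk.1, hk.2], rfl⟩

lemma pre_eq {n : ℕ} (t : ℕ → ℕ) {i : ℕ} (hi : i ≤ n) :
    pre t i = ∑ x ∈ (Finset.univ : Finset (Fin n)).filter (fun x => x.1 < i), t x.1 := by
  rw [Finset.sum_filter, Fin.sum_univ_eq_sum_range (fun k => if k < i then t k else 0) n,
    pre, ← Finset.sum_filter]
  congr 1
  ext k
  simp only [Finset.mem_filter, Finset.mem_range]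
  omega

lemma Good.nonempty {t : ℕ → ℕ} (ht : Good t n) {i : ℕ} (hi : i < n) :
    (cands t i).Nonempty :=
  cands_nonempty (ht.dom (i + 1) hi)

lemma part_eq_of_mem {P : Finpartition (Finset.univ : Finset (Fin n))}
    {B : Finset (Fin n)} {x : Fin n} (hB : B ∈ P.parts) (hx : x ∈ B) : B = P.part x :=
  P.eq_of_mem_parts hB (P.part_mem.2 (Finset.mem_univ x)) hx (P.mem_part (Finset.mem_univ x))

/-- The fiber partition is noncrossing. -/
lemma Pa_noncrossing {t : ℕ → ℕ} (ht : Good t n) : IsNoncrossing (Pa t n) := by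
  rintro ⟨p₁, q₁, p₂, q₂, h1, h2, h3, B, hB, C, hC, hBC, hp₁, hp₂, hq₁, hq₂⟩
  have hBp : B = (Pa t n).part p₁ := part_eq_of_mem hB hp₁
  have hCq : C = (Pa t n).part q₁ := part_eq_of_mem hC hq₁
  have hμ : Gf t p₂.1 = Gf t p₁.1 := mem_Pa_part.1 (hBp ▸ hp₂)
  have hν : Gf t q₂.1 = Gf t q₁.1 := mem_Pa_part.1 (hCq ▸ hq₂)
  set μ := Gf t p₁.1 with hμdef
  set ν := Gf t q₁.1 with hνdef
  have hμν : μ ≠ ν := by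
    intro h
    apply hBC
    rw [hBp, hCq]
    have : q₁ ∈ (Pa t n).part p₁ := mem_Pa_part.2 (by rw [← hνdef, ← h])
    exact (part_eq_of_mem ((Pa t n).part_mem.2 (Finset.mem_univ p₁)) this).symm ▸ rfl
  have hμle : μ ≤ p₁.1 := Gf_le (ht.nonempty p₁.isLt)
  have hνle : ν ≤ q₁.1 := Gf_le (ht.nonempty q₁.isLt)
  have h1' : p₁.1 < q₁.1 := h1
  have h2' : q₁.1 < p₂.1 := h2
  have h3' : p₂.1 < q₂.1 := h3
  rcases lt_or_gt_of_ne hμν with hlt | hgt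
  · -- μ < ν
    have hA : ¬ Qc t p₂.1 ν := Gf_max (by omega : Gf t p₂.1 < ν) (by omega)
    have hB1 : Qc t q₂.1 ν := by have := Gf_Q (ht.nonempty q₂.isLt); rwa [hν] at this
    have hC1 : ¬ Qc t q₂.1 (p₂.1 + 1) := by
      refine Gf_max ?_ (by omega)
      rw [hν]; omega
    rw [Qc_iff_Zh] at hA hB1 hC1
    omega
  · -- ν < μ
    have hA : ¬ Qc t q₁.1 μ := Gf_max (by omega : Gf t q₁.1 < μ) (by omega)
    have hB1 : Qc t p₂.1 μ := by have := Gf_Q (ht.nonempty p₂.isLt); rwa [hμ] at this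
    have hC1 : ¬ Qc t p₂.1 (q₁.1 + 1) := by
      refine Gf_max ?_ (by omega)
      rw [hμ]; omega
    rw [Qc_iff_Zh] at hA hB1 hC1
    omega

/-- Fibers have the prescribed cardinality. -/
lemma card_fiber {t : ℕ → ℕ} (ht : Good t n) {m : ℕ} (hm : m < n) :
    ((Finset.univ : Finset (Fin n)).filter (fun x => Gf t x.1 = m)).card = t m := by
  have key : ∀ m', m' < n →
      ((Finset.univ : Finset (Fin n)).filter (fun x => Gf t x.1 = m')).card ≤ t m' := by
    intro m' _
    have hicc : (Finset.Icc (Zh t m') (Zh t m' + t m' - 1)).card = t m' := by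
      rw [Int.card_Icc]; omega
    rw [← hicc]
    apply Finset.card_le_card_of_injOn (fun x : Fin n => Zh t (x.1 + 1))
    · intro x hx
      simp only [Finset.coe_filter, Set.mem_setOf_eq, mem_univ, true_and] at hx
      have hne := ht.nonempty x.isLt
      have hQ := Gf_Q hne
      rw [hx] at hQ
      have hlow := (Qc_iff_Zh t x.1 m').1 hQ
      have hle := Gf_le hne
      rw [hx] at hle
      have hupp : Zh t (x.1 + 1) ≤ Zh t m' + t m' - 1 := by
        rcases eq_or_lt_of_le hle with heq | hlt
        · rw [← heq, Zh_succ]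
        · have hnQ := Gf_max (by omega : Gf t x.1 < m' + 1) hlt
          rw [Qc_iff_Zh] at hnQ
          have := Zh_succ t m'
          omega
      rw [Finset.mem_coe, Finset.mem_Icc]
      exact ⟨hlow, hupp⟩
    · intro x hx y hy hxy
      simp only [Finset.coe_filter, Set.mem_setOf_eq, mem_univ, true_and] at hx hy
      have hxy' : Zh t (x.1 + 1) = Zh t (y.1 + 1) := hxy
      by_contra hne
      have hlt : ∀ a b : Fin n, Gf t a.1 = m' → Gf t b.1 = m' → a < b →
          Zh t (b.1 + 1) < Zh t (a.1 + 1) := by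
        intro a b ha hb hab
        have hge : m' ≤ a.1 := by
          have := Gf_le (ht.nonempty a.isLt); omega
        have hnQ := Gf_max (t := t) (i := b.1) (m := a.1 + 1)
          (by omega) (by exact hab)
        rw [Qc_iff_Zh] at hnQ
        omega
      rcases lt_trichotomy x y with h | h | h
      · have := hlt x y hx hy h; omega
      · exact hne h
      · have := hlt y x hy hx h; omega
  have h1 : ∑ m' ∈ range n,
      ((Finset.univ : Finset (Fin n)).filter (fun x => Gf t x.1 = m')).card = n := by
    have hmaps : ∀ x : Fin n, x ∈ (Finset.univ : Finset (Fin n)) →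
        Gf t x.1 ∈ range n := by
      intro x _
      have := Gf_le (ht.nonempty x.isLt)
      simp only [Finset.mem_range]
      omega
    have := Finset.card_eq_sum_card_fiberwise hmaps
    simpa using this.symm
  have h2 : ∑ m' ∈ range n, t m' = n := ht.total
  have hiff := (Finset.sum_eq_sum_iff_of_le
    (fun i hi => key i (Finset.mem_range.1 hi))).1 (h1.trans h2.symm)
  exact hiff m (Finset.mem_range.2 hm)

/-! ### The sequence associated to a noncrossing partition -/

/-- The minimum (as a natural number) of a finset of `Fin n`. -/
noncomputable def mo (B : Finset (Fin n)) : ℕ := sInf (Fin.val '' (B : Set (Fin n)))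

lemma mo_le {B : Finset (Fin n)} {x : Fin n} (hx : x ∈ B) : mo B ≤ x.1 :=
  Nat.sInf_le ⟨x, hx, rfl⟩

lemma mo_mem {B : Finset (Fin n)} (hB : B.Nonempty) : ∃ x ∈ B, x.1 = mo B := by
  obtain ⟨x, hx⟩ := hB
  have : mo B ∈ Fin.val '' (B : Set (Fin n)) := Nat.sInf_mem ⟨x.1, x, hx, rfl⟩
  obtain ⟨y, hy, h⟩ := this
  exact ⟨y, hy, h⟩

/-- The Łukasiewicz-type sequence of a partition. -/
noncomputable def tp (P : Finpartition (Finset.univ : Finset (Fin n))) : ℕ → ℕ :=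
  fun k => if h : k < n then
      (if k = mo (P.part ⟨k, h⟩) then (P.part ⟨k, h⟩).card else 0)
    else 0

lemma tp_val (P : Finpartition (Finset.univ : Finset (Fin n))) (x : Fin n) :
    tp P x.1 = if x.1 = mo (P.part x) then (P.part x).card else 0 := by
  simp only [tp, x.isLt, dite_true, Fin.eta]

lemma nonempty_parts_of_mem {P : Finpartition (Finset.univ : Finset (Fin n))}
    {B : Finset (Fin n)} (hB : B ∈ P.parts) : B.Nonempty := by
  rcases Finset.eq_empty_or_nonempty B with h | h
  · exact absurd hB (h ▸ P.bot_notMem)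
  · exact h

/-- Sum of `tp P` over a val-predicate is a sum of block sizes. -/
lemma sum_tp (P : Finpartition (Finset.univ : Finset (Fin n))) (p : ℕ → Prop)
    [DecidablePred p] :
    ∑ x ∈ (Finset.univ : Finset (Fin n)).filter (fun x => p x.1), tp P x.1
      = ∑ B ∈ P.parts.filter (fun B => p (mo B)), B.card := by
  have step1 : ∑ x ∈ (Finset.univ : Finset (Fin n)).filter (fun x => p x.1), tp P x.1
      = ∑ x ∈ (Finset.univ : Finset (Fin n)).filter
          (fun x => p x.1 ∧ x.1 = mo (P.part x)), (P.part x).card := by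
    rw [Finset.sum_filter, Finset.sum_filter]
    apply Finset.sum_congr rfl
    intro x _
    rw [tp_val]
    by_cases h1 : p x.1 <;> by_cases h2 : x.1 = mo (P.part x) <;> simp [h1, h2]
  rw [step1]
  apply Finset.sum_bij (fun x _ => P.part x)
  · intro x hx
    simp only [mem_filter, mem_univ, true_and] at hx
    exact Finset.mem_filter.2 ⟨P.part_mem.2 (Finset.mem_univ x), by rw [← hx.2]; exact hx.1⟩
  · intro x hx y hy h
    simp only [mem_filter, mem_univ, true_and] at hx hy
    apply Fin.ext
    rw [hx.2, hy.2, h]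
  · intro B hB
    simp only [mem_filter] at hB
    obtain ⟨x, hxB, hx⟩ := mo_mem (nonempty_parts_of_mem hB.1)
    have hpart : P.part x = B := (part_eq_of_mem hB.1 hxB).symm
    refine ⟨x, Finset.mem_filter.2 ⟨Finset.mem_univ x, ?_, ?_⟩, hpart⟩
    · rw [hx]; exact hB.2
    · rw [hpart, hx]
  · intro x _; rfl

lemma card_disj_parts (P : Finpartition (Finset.univ : Finset (Fin n)))
    (F : Finset (Finset (Fin n))) (hF : F ⊆ P.parts) :
    (F.biUnion id).card = ∑ B ∈ F, B.card := by
  apply Finset.card_biUnion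
  intro x hx y hy hxy
  exact P.disjoint (hF hx) (hF hy) hxy

lemma band_split (f : Fin n → ℕ) {b c : ℕ} (hbc : b ≤ c) :
    ∑ x ∈ (Finset.univ : Finset (Fin n)).filter (fun x => x.1 < c), f x
      = ∑ x ∈ (Finset.univ : Finset (Fin n)).filter (fun x => x.1 < b), f x
        + ∑ x ∈ (Finset.univ : Finset (Fin n)).filter (fun x => b ≤ x.1 ∧ x.1 < c), f x := by
  rw [← Finset.sum_filter_add_sum_filter_not
    ((Finset.univ : Finset (Fin n)).filter (fun x => x.1 < c)) (fun x => x.1 < b)]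
  congr 1
  · congr 1
    ext x
    simp only [Finset.mem_filter, Finset.mem_univ, true_and]
    omega
  · congr 1
    ext x
    simp only [Finset.mem_filter, Finset.mem_univ, true_and]
    omega

lemma card_lt_filter {i : ℕ} (hi : i ≤ n) :
    ((Finset.univ : Finset (Fin n)).filter (fun x => x.1 < i)).card = i := by
  have h := card_band (n := n) (a := 0) (hb := hi)
  rw [Nat.sub_zero] at h
  have heq : ((Finset.univ : Finset (Fin n)).filter (fun x => x.1 < i))
      = ((Finset.univ : Finset (Fin n)).filter (fun x => 0 ≤ x.1 ∧ x.1 < i)) := by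
    ext x; simp
  rw [heq]
  exact h

lemma tp_good (P : Finpartition (Finset.univ : Finset (Fin n))) : Good (tp P) n := by
  have htot : ∀ i ≤ n, pre (tp P) i = ∑ B ∈ P.parts.filter (fun B => mo B < i), B.card := by
    intro i hi
    rw [pre_eq (tp P) hi]
    exact sum_tp P (fun k => k < i)
  constructor
  · intro k hk
    simp only [tp]
    rw [dif_neg (by omega)]
  · rw [htot n le_rfl]
    have hfilter : P.parts.filter (fun B => mo B < n) = P.parts := by
      apply Finset.filter_true_of_mem
      intro B hB
      obtain ⟨x, _, hx⟩ := mo_mem (nonempty_parts_of_mem hB)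
      rw [← hx]
      exact x.isLt
    rw [hfilter, P.sum_card_parts]
    simp
  · intro i hi
    rw [htot i hi, ← card_disj_parts P _ (Finset.filter_subset _ _)]
    calc i = ((Finset.univ : Finset (Fin n)).filter (fun x => x.1 < i)).card :=
        (card_lt_filter hi).symm
      _ ≤ _ := by
        apply Finset.card_le_card
        intro x hx
        simp only [Finset.mem_filter, Finset.mem_univ, true_and] at hx
        apply Finset.mem_biUnion.2
        refine ⟨P.part x, Finset.mem_filter.2 ⟨P.part_mem.2 (Finset.mem_univ x), ?_⟩,
          P.mem_part (Finset.mem_univ x)⟩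
        exact lt_of_le_of_lt (mo_le (P.mem_part (Finset.mem_univ x))) hx

/-- Key identity: for a noncrossing partition, `Gf` recovers block minima. -/
lemma Gf_tp {P : Finpartition (Finset.univ : Finset (Fin n))} (hP : IsNoncrossing P)
    (i : Fin n) : Gf (tp P) i.1 = mo (P.part i) := by
  set m₀ := mo (P.part i) with hm₀
  have hiP : i ∈ P.part i := P.mem_part (Finset.mem_univ i)
  have hm₀le : m₀ ≤ i.1 := mo_le hiP
  obtain ⟨a, haP, ha⟩ := mo_mem (⟨i, hiP⟩ : (P.part i).Nonempty)
  -- Claim A : blocks meeting [m₀, i] have minimum ≥ m₀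
  have claimA : ∀ x : Fin n, m₀ ≤ x.1 → x.1 ≤ i.1 → m₀ ≤ mo (P.part x) := by
    intro x hx1 hx2
    by_contra hcon
    push_neg at hcon
    have hne : P.part x ≠ P.part i := by
      intro h; rw [h] at hcon; omega
    have hxPi : x ∉ P.part i := by
      intro hmem
      exact hne (P.eq_of_mem_parts (P.part_mem.2 (Finset.mem_univ x))
        (P.part_mem.2 (Finset.mem_univ i)) (P.mem_part (Finset.mem_univ x)) hmem)
    obtain ⟨c, hcP, hc⟩ := mo_mem (⟨x, P.mem_part (Finset.mem_univ x)⟩ :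
      (P.part x).Nonempty)
    have hax : a < x := by
      rw [Fin.lt_def, ha]
      rcases eq_or_lt_of_le hx1 with h | h
      · exfalso; apply hxPi
        have : a = x := Fin.ext (by omega)
        rwa [← this]
      · exact h
    have hxi : x < i := by
      rw [Fin.lt_def]
      rcases eq_or_lt_of_le hx2 with h | h
      · exfalso; apply hxPi; have : x = i := Fin.ext h; rw [this]; exact hiP
      · exact h
    exact hP ⟨c, a, x, i, by rw [Fin.lt_def, ha, hc]; omega, hax, hxi,
      P.part x, P.part_mem.2 (Finset.mem_univ x), P.part i, P.part_mem.2 (Finset.mem_univ i),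
      hne, hcP, P.mem_part (Finset.mem_univ x), haP, hiP⟩
  have hband : ∀ m' ≤ i.1 + 1,
      pre (tp P) (i.1 + 1) = pre (tp P) m'
        + ∑ B ∈ P.parts.filter (fun B => m' ≤ mo B ∧ mo B < i.1 + 1), B.card := by
    intro m' hm'
    rw [pre_eq (tp P) (by omega : i.1 + 1 ≤ n), pre_eq (tp P) (by omega : m' ≤ n),
      band_split (fun x => tp P x.1) hm']
    congr 1
    exact sum_tp P (fun k => m' ≤ k ∧ k < i.1 + 1)
  -- m₀ is a candidate
  have hcand : m₀ ∈ cands (tp P) i.1 := by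
    refine mem_cands.2 ⟨by omega, ?_⟩
    unfold Qc
    rw [hband m₀ (by omega)]
    have hle1 : i.1 + 1 - m₀
        ≤ ∑ B ∈ P.parts.filter (fun B => m₀ ≤ mo B ∧ mo B < i.1 + 1), B.card := by
      rw [← card_disj_parts P _ (Finset.filter_subset _ _),
        ← card_band (n := n) (a := m₀) (b := i.1 + 1) (by omega)]
      apply Finset.card_le_card
      intro x hx
      simp only [Finset.mem_filter, Finset.mem_univ, true_and] at hx
      apply Finset.mem_biUnion.2
      refine ⟨P.part x, Finset.mem_filter.2 ⟨P.part_mem.2 (Finset.mem_univ x),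
        claimA x hx.1 (by omega), lt_of_le_of_lt (mo_le (P.mem_part (Finset.mem_univ x)))
          (by omega)⟩, P.mem_part (Finset.mem_univ x)⟩
    omega
  -- no larger candidate
  have hmax : ∀ m', m₀ < m' → m' ≤ i.1 → ¬ Qc (tp P) i.1 m' := by
    intro m' hm'1 hm'2 hQ
    unfold Qc at hQ
    rw [hband m' (by omega)] at hQ
    have hle2 : ∑ B ∈ P.parts.filter (fun B => m' ≤ mo B ∧ mo B < i.1 + 1), B.card
        ≤ i.1 - m' := by
      rw [← card_disj_parts P _ (Finset.filter_subset _ _),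
        ← card_band (n := n) (a := m') (b := i.1) (by omega)]
      apply Finset.card_le_card
      intro x hx
      obtain ⟨B, hBmem, hxB⟩ := Finset.mem_biUnion.1 hx
      simp only [Finset.mem_filter] at hBmem
      obtain ⟨hBparts, hmoB1, hmoB2⟩ := hBmem
      simp only [id] at hxB
      have hBne : B ≠ P.part i := by
        intro h
        rw [h, ← hm₀] at hmoB1
        omega
      have hiB : i ∉ B := by
        intro hmem
        exact hBne (P.eq_of_mem_parts hBparts (P.part_mem.2 (Finset.mem_univ i)) hmem hiP)
      have hxval : m' ≤ x.1 := le_trans hmoB1 (mo_le hxB)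
      have hxlt : x.1 < i.1 := by
        have hxnei : x ≠ i := fun h => hiB (h ▸ hxB)
        rcases lt_trichotomy x.1 i.1 with h | h | h
        · exact h
        · exact absurd (Fin.ext h) hxnei
        · exfalso
          obtain ⟨c, hcB, hc⟩ := mo_mem (nonempty_parts_of_mem hBparts)
          have hciB : c ≠ i := fun hh => hiB (hh ▸ hcB)
          have hlt1 : a < c := by rw [Fin.lt_def, ha, hc]; omega
          have hlt2 : c < i := by
            rw [Fin.lt_def]
            have hci : c.1 ≤ i.1 := by rw [hc]; omega
            rcases lt_or_eq_of_le hci with hh | hh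
            · exact hh
            · exact absurd (Fin.ext hh) hciB
          exact hP ⟨a, c, i, x, hlt1, hlt2, by rw [Fin.lt_def]; omega,
            P.part i, P.part_mem.2 (Finset.mem_univ i), B, hBparts,
            fun hh => hBne hh.symm, haP, hiP, hcB, hxB⟩
      simp only [Finset.mem_filter, Finset.mem_univ, true_and]
      exact ⟨hxval, hxlt⟩
    omega
  -- conclude
  have hne : (cands (tp P) i.1).Nonempty := ⟨m₀, hcand⟩
  have h1 : m₀ ≤ Gf (tp P) i.1 := le_Gf hcand
  have h2 : Gf (tp P) i.1 ≤ i.1 := Gf_le hne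
  rcases eq_or_lt_of_le h1 with h | h
  · exact h.symm
  · exact absurd (Gf_Q hne) (hmax _ h h2)

lemma mem_parts_iff {P : Finpartition (Finset.univ : Finset (Fin n))}
    {B : Finset (Fin n)} : B ∈ P.parts ↔ ∃ x, B = P.part x := by
  constructor
  · intro hB
    obtain ⟨x, hx⟩ := nonempty_parts_of_mem hB
    exact ⟨x, part_eq_of_mem hB hx⟩
  · rintro ⟨x, rfl⟩
    exact P.part_mem.2 (Finset.mem_univ x)

lemma part_eq_part_of_mo {P : Finpartition (Finset.univ : Finset (Fin n))}
    {x y : Fin n} (h : mo (P.part x) = mo (P.part y)) : P.part x = P.part y := by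
  obtain ⟨c, hcx, hc⟩ := mo_mem (⟨x, P.mem_part (Finset.mem_univ x)⟩ : (P.part x).Nonempty)
  obtain ⟨d, hdy, hd⟩ := mo_mem (⟨y, P.mem_part (Finset.mem_univ y)⟩ : (P.part y).Nonempty)
  have hcd : c = d := Fin.ext (by rw [hc, hd, h])
  exact P.eq_of_mem_parts (P.part_mem.2 (Finset.mem_univ x)) (P.part_mem.2 (Finset.mem_univ y))
    hcx (hcd ▸ hdy)

lemma Pa_tp {P : Finpartition (Finset.univ : Finset (Fin n))} (hP : IsNoncrossing P) :
    Pa (tp P) n = P := by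
  have hpart : ∀ x : Fin n, (Pa (tp P) n).part x = P.part x := by
    intro x
    ext y
    rw [mem_Pa_part, Gf_tp hP, Gf_tp hP]
    constructor
    · intro h
      have heq := part_eq_part_of_mo h
      rw [← heq]
      exact P.mem_part (Finset.mem_univ y)
    · intro hy
      have : P.part y = P.part x :=
        P.eq_of_mem_parts (P.part_mem.2 (Finset.mem_univ y)) (P.part_mem.2 (Finset.mem_univ x))
          (P.mem_part (Finset.mem_univ y)) hy
      rw [this]
  apply Finpartition.ext
  ext B
  rw [mem_parts_iff, mem_parts_iff]
  exact ⟨fun ⟨x, h⟩ => ⟨x, h.trans (hpart x)⟩, fun ⟨x, h⟩ => ⟨x, h.trans (hpart x).symm⟩⟩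

lemma part_Pa_eq_fiber {t : ℕ → ℕ} (x : Fin n) :
    (Pa t n).part x
      = (Finset.univ : Finset (Fin n)).filter (fun y => Gf t y.1 = Gf t x.1) := by
  ext y
  rw [mem_Pa_part]
  simp

lemma mo_Pa_part {t : ℕ → ℕ} (ht : Good t n) (x : Fin n) :
    mo ((Pa t n).part x) = Gf t x.1 := by
  have hmlt : Gf t x.1 < n := lt_of_le_of_lt (Gf_le (ht.nonempty x.isLt)) x.isLt
  have hmem : (⟨Gf t x.1, hmlt⟩ : Fin n) ∈ (Pa t n).part x := by
    rw [mem_Pa_part]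
    exact Gf_self (Gf_pos (ht.nonempty x.isLt))
  apply le_antisymm (mo_le hmem)
  obtain ⟨z, hz, hzval⟩ := mo_mem (⟨x, (Pa t n).mem_part (Finset.mem_univ x)⟩ :
    ((Pa t n).part x).Nonempty)
  rw [← hzval]
  rw [mem_Pa_part] at hz
  calc Gf t x.1 = Gf t z.1 := hz.symm
    _ ≤ z.1 := Gf_le (ht.nonempty z.isLt)

lemma tp_Pa {t : ℕ → ℕ} (ht : Good t n) : tp (Pa t n) = t := by
  funext k
  by_cases hk : k < n
  · simp only [tp, dif_pos hk]
    have hmo : mo ((Pa t n).part ⟨k, hk⟩) = Gf t k := mo_Pa_part ht ⟨k, hk⟩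
    have hfib : (Pa t n).part ⟨k, hk⟩
        = (Finset.univ : Finset (Fin n)).filter (fun y => Gf t y.1 = Gf t k) :=
      part_Pa_eq_fiber ⟨k, hk⟩
    rw [hmo, hfib]
    by_cases htk : t k = 0
    · have hne : k ≠ Gf t k := by
        intro h
        exact Gf_pos (ht.nonempty hk) (h ▸ htk)
      rw [if_neg hne]
      exact htk.symm
    · have hGf : Gf t k = k := Gf_self htk
      rw [if_pos hGf.symm, hGf]
      exact card_fiber ht hk
  · simp only [tp]
    rw [dif_neg hk, (ht.supp k (by omega)).symm]

/-- Weight identity for a partition and its sequence, stated over `Fin (n+1)`. -/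
lemma weight_eq (g : ℕ → ℝ) (P : Finpartition (Finset.univ : Finset (Fin n))) :
    ∏ V ∈ P.parts, g V.card
      = ∏ x ∈ (Finset.univ : Finset (Fin (n + 1))).filter (fun x => tp P x.1 ≠ 0),
          g (tp P x.1) := by
  have key : ∀ V ∈ P.parts, mo V < n ∧ tp P (mo V) = V.card := by
    intro V hV
    obtain ⟨x, hxV, hx⟩ := mo_mem (nonempty_parts_of_mem hV)
    have h1 : mo V < n := by rw [← hx]; exact x.isLt
    have hpart : P.part x = V := (part_eq_of_mem hV hxV).symm
    refine ⟨h1, ?_⟩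
    rw [← hx, tp_val, hpart, if_pos (by rw [hx])]
  apply Finset.prod_bij (fun V hV => (⟨mo V, by have := (key V hV).1; omega⟩ : Fin (n + 1)))
  · intro V hV
    obtain ⟨h1, h2⟩ := key V hV
    simp only [Finset.mem_filter, Finset.mem_univ, true_and]
    rw [h2]
    have := nonempty_parts_of_mem hV
    simp [Finset.card_eq_zero, ← Finset.nonempty_iff_ne_empty, this]
  · intro V hV W hW h
    have hmo : mo V = mo W := by
      have := congrArg Fin.val h
      simpa using this
    obtain ⟨x, hxV, hx⟩ := mo_mem (nonempty_parts_of_mem hV)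
    obtain ⟨y, hyW, hy⟩ := mo_mem (nonempty_parts_of_mem hW)
    have hxy : x = y := Fin.ext (by rw [hx, hy, hmo])
    exact P.eq_of_mem_parts hV hW hxV (hxy ▸ hyW)
  · intro y hy
    simp only [Finset.mem_filter, Finset.mem_univ, true_and] at hy
    have hylt : y.1 < n := by
      by_contra h
      exact hy (by simp only [tp]; rw [dif_neg h])
    set x : Fin n := ⟨y.1, hylt⟩ with hxdef
    have htp : tp P y.1 = tp P x.1 := rfl
    rw [htp, tp_val] at hy
    have hmo : x.1 = mo (P.part x) := by
      by_contra h
      exact hy (by rw [if_neg h])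
    refine ⟨P.part x, P.part_mem.2 (Finset.mem_univ x), ?_⟩
    apply Fin.ext
    simp only
    rw [← hmo]
  · intro V hV
    rw [(key V hV).2]

end KrewerasAux

section CycleLemma

open Finset KrewerasAux

variable {n : ℕ}

/-- Periodization of a tuple. -/
def pu (u : Fin (n + 1) → ℕ) : ℕ → ℕ := fun l => u (l : Fin (n + 1))

/-- Rotation of a tuple. -/
def rot (k : ℕ) (u : Fin (n + 1) → ℕ) : Fin (n + 1) → ℕ := fun i => u (i + (k : Fin (n + 1)))

/-- Dominating condition. -/
def Dom (u : Fin (n + 1) → ℕ) : Prop := ∀ i, i ≤ n → i ≤ pre (pu u) i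

lemma pu_rot (u : Fin (n + 1) → ℕ) (k l : ℕ) : pu (rot k u) l = pu u (l + k) := by
  simp [pu, rot, Nat.cast_add]

lemma rot_rot (u : Fin (n + 1) → ℕ) (k l : ℕ) : rot k (rot l u) = rot (l + k) u := by
  funext i; simp [rot, Nat.cast_add, add_assoc, add_comm]

lemma rot_n1 (u : Fin (n + 1) → ℕ) : rot (n + 1) u = u := by
  funext i; simp [rot, Fin.natCast_self]

lemma sum_rot (u : Fin (n + 1) → ℕ) (k : ℕ) : ∑ i, rot k u i = ∑ i, u i :=
  Fintype.sum_equiv (Equiv.addRight (k : Fin (n + 1))) _ _ (fun i => rfl)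

lemma pre_add (t : ℕ → ℕ) (a b : ℕ) :
    pre t (a + b) = pre t a + ∑ l ∈ Finset.range b, t (a + l) := by
  induction b with
  | zero => simp [pre]
  | succ b ih => rw [← Nat.add_assoc, pre_succ, ih, Finset.sum_range_succ]; ring

/-- Window sums of the periodization. -/
lemma pre_pu_add (u : Fin (n + 1) → ℕ) (hu : ∑ i, u i = n) (m : ℕ) :
    pre (pu u) (m + (n + 1)) = pre (pu u) m + n := by
  rw [pre_add]
  congr 1
  have h1 : ∀ l, pu u (m + l) = u ((m : Fin (n + 1)) + (l : Fin (n + 1))) := by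
    intro l; simp [pu, Nat.cast_add]
  calc ∑ l ∈ Finset.range (n + 1), pu u (m + l)
      = ∑ l ∈ Finset.range (n + 1), u ((m : Fin (n + 1)) + (l : Fin (n + 1))) :=
        Finset.sum_congr rfl (fun l _ => h1 l)
    _ = ∑ i : Fin (n + 1), u ((m : Fin (n + 1)) + i) := by
        rw [← Fin.sum_univ_eq_sum_range (fun l => u ((m : Fin (n + 1)) + (l : Fin (n + 1))))]
        apply Finset.sum_congr rfl
        intro i _
        congr 1
        rw [Fin.cast_val_eq_self]
    _ = ∑ i : Fin (n + 1), u i :=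
        Fintype.sum_equiv (Equiv.addLeft (m : Fin (n + 1))) _ _ (fun i => rfl)
    _ = n := hu

lemma Zh_pu_period (u : Fin (n + 1) → ℕ) (hu : ∑ i, u i = n) (m : ℕ) :
    Zh (pu u) (m + (n + 1)) = Zh (pu u) m - 1 := by
  unfold Zh
  rw [pre_pu_add u hu]
  push_cast
  ring

lemma dom_rot_iff (u : Fin (n + 1) → ℕ) (k : ℕ) :
    Dom (rot k u) ↔ ∀ j, j ≤ n → Zh (pu u) k ≤ Zh (pu u) (k + j) := by
  have hpre : ∀ j, pre (pu (rot k u)) j = pre (pu u) (k + j) - pre (pu u) k := by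
    intro j
    have : pre (pu u) (k + j) = pre (pu u) k + pre (pu (rot k u)) j := by
      rw [pre_add]
      congr 1
      apply Finset.sum_congr rfl
      intro l _
      rw [pu_rot]
      congr 1
      omega
    omega
  constructor
  · intro hd j hj
    have := hd j hj
    rw [hpre j] at this
    have hmono : pre (pu u) k ≤ pre (pu u) (k + j) := pre_mono _ (by omega)
    unfold Zh
    push_cast
    omega
  · intro hz j hj
    have := hz j hj
    unfold Zh at this
    rw [hpre j]
    have hmono : pre (pu u) k ≤ pre (pu u) (k + j) := pre_mono _ (by omega)
    push_cast at this
    omega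

/-- The weighted cycle lemma: exactly one rotation is dominating. -/
lemma exists_unique_rot (u : Fin (n + 1) → ℕ) (hu : ∑ i, u i = n) :
    ∃! k, k < n + 1 ∧ Dom (rot k u) := by
  set A := Zh (pu u) with hA
  have hex : ∃ k, k < n + 1 ∧ ∀ l, l < n + 1 → A k ≤ A l := by
    obtain ⟨k, hk, hmin⟩ := Finset.exists_min_image (Finset.range (n + 1)) A
      ⟨0, by simp⟩
    exact ⟨k, by simpa using hk, fun l hl => hmin l (by simpa using hl)⟩
  set K := Nat.find hex with hK
  obtain ⟨hKlt, hKmin⟩ := Nat.find_spec hex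
  rw [← hK] at hKlt
  have hKmin' : ∀ l, l < n + 1 → A K ≤ A l := by rw [hK]; exact hKmin
  clear hKmin
  have hKmin := hKmin'
  have hstrict : ∀ k, k < K → A K < A k := by
    intro k hk
    have hknlt : k < n + 1 := by omega
    have := Nat.find_min hex hk
    push_neg at this
    obtain ⟨l, hl, hAl⟩ := this hknlt
    exact lt_of_le_of_lt (hKmin l hl) hAl
  refine ⟨K, ⟨hKlt, ?_⟩, ?_⟩
  · rw [dom_rot_iff]
    intro j hj
    by_cases h : K + j < n + 1
    · exact hKmin _ h
    · have hr : K + j = (K + j - (n + 1)) + (n + 1) := by omega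
      rw [hr, Zh_pu_period u hu, ← hA]
      have hrK : K + j - (n + 1) < K := by omega
      have := hstrict _ hrK
      omega
  · rintro k ⟨hklt, hkdom⟩
    rw [dom_rot_iff] at hkdom
    by_contra hne
    rcases lt_or_gt_of_ne hne with hlt | hgt
    · -- k < K
      have hj : K - k ≤ n := by omega
      have := hkdom (K - k) hj
      have hkK : k + (K - k) = K := by omega
      rw [hkK] at this
      exact absurd this (not_le.2 (hstrict k hlt))
    · -- k > K
      have hj : K + (n + 1) - k ≤ n := by omega
      have h5 := hkdom (K + (n + 1) - k) hj
      have hkK : k + (K + (n + 1) - k) = K + (n + 1) := by omega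
      rw [hkK, Zh_pu_period u hu, ← hA] at h5
      have h6 := hKmin k hklt
      omega

end CycleLemma

section Counting

open Finset

lemma sum_eq_msum {j : ℕ} (f : Fin j → ℕ) :
    ∑ i, f i = (Multiset.map f Finset.univ.val).sum := rfl

lemma fMult_eq_prod_subset (M : Multiset ℕ) (S : Finset ℕ) (hS : M.toFinset ⊆ S) :
    fMult M = S.prod fun k => (M.count k).factorial := by
  unfold fMult
  apply Finset.prod_subset hS
  intro x _ hx
  rw [Multiset.count_eq_zero.2 (fun h => hx (Multiset.mem_toFinset.2 h))]
  rfl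

lemma fMult_erase {M : Multiset ℕ} {k : ℕ} (hk : k ∈ M) :
    fMult M = M.count k * fMult (M.erase k) := by
  have hsub : (M.erase k).toFinset ⊆ M.toFinset := by
    intro x hx
    rw [Multiset.mem_toFinset] at hx ⊢
    exact Multiset.mem_of_mem_erase hx
  rw [fMult_eq_prod_subset (M.erase k) M.toFinset hsub]
  unfold fMult
  have hkS : k ∈ M.toFinset := Multiset.mem_toFinset.2 hk
  rw [← Finset.mul_prod_erase _ _ hkS, ← Finset.mul_prod_erase _ _ hkS]
  have hc : 1 ≤ M.count k := (Multiset.count_pos).2 hk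
  have h1 : (M.count k).factorial = M.count k * ((M.erase k).count k).factorial := by
    rw [Multiset.count_erase_self]
    rcases Nat.exists_eq_add_of_le hc with ⟨c, hcc⟩
    rw [hcc]
    simp [Nat.factorial_succ, Nat.add_comm 1 c]
  rw [h1]
  have h2 : ∀ x ∈ M.toFinset.erase k,
      ((M.erase k).count x).factorial = (M.count x).factorial := by
    intro x hx
    rw [Multiset.count_erase_of_ne (Finset.ne_of_mem_erase hx)]
  rw [Finset.prod_congr rfl h2]
  ring

lemma map_tuple_succ {j : ℕ} {α : Type*} (a : Fin (j + 1) → α) :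
    Multiset.map a Finset.univ.val
      = a 0 ::ₘ Multiset.map (fun i : Fin j => a i.succ) Finset.univ.val := by
  rw [Fin.univ_succ, Finset.cons_val, Multiset.map_cons, Finset.map_val, Multiset.map_map]
  rfl

/-- Number of tuples with a given value multiset. -/
lemma arr_count : ∀ (j : ℕ) (M : Multiset ℕ), Multiset.card M = j →
    ((Finset.Nat.antidiagonalTuple j M.sum).filter
        (fun a => Multiset.map a Finset.univ.val = M)).card * fMult M = j.factorial := by
  intro j
  induction j with
  | zero =>
    intro M hM
    rw [Multiset.card_eq_zero.1 hM]
    have h1 : (Finset.Nat.antidiagonalTuple 0 (0 : Multiset ℕ).sum).filter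
        (fun a => Multiset.map a Finset.univ.val = (0 : Multiset ℕ))
        = Finset.Nat.antidiagonalTuple 0 0 := by
      apply Finset.filter_true_of_mem
      intro a _
      simp
    rw [h1]
    simp [fMult, Finset.Nat.antidiagonalTuple_zero_right]
  | succ j ih =>
    intro M hM
    set F := (Finset.Nat.antidiagonalTuple (j + 1) M.sum).filter
        (fun a => Multiset.map a Finset.univ.val = M) with hF
    have hmaps : ∀ a ∈ F, a 0 ∈ M.toFinset := by
      intro a ha
      rw [hF, Finset.mem_filter] at ha
      rw [Multiset.mem_toFinset, ← ha.2]
      exact Multiset.mem_map.2 ⟨0, Finset.mem_univ_val _, rfl⟩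
    have hcard := Finset.card_eq_sum_card_fiberwise hmaps
    have hfib : ∀ k ∈ M.toFinset, (F.filter (fun a => a 0 = k)).card
        = ((Finset.Nat.antidiagonalTuple j (M.erase k).sum).filter
            (fun a => Multiset.map a Finset.univ.val = M.erase k)).card := by
      intro k hk
      have hkM : k ∈ M := Multiset.mem_toFinset.1 hk
      apply Finset.card_nbij' (fun a => fun i : Fin j => a i.succ)
        (fun a => Fin.cons k a)
      · intro a ha
        simp only [hF, Finset.coe_filter, Set.mem_setOf_eq, Finset.mem_filter, Finset.Nat.mem_antidiagonalTuple] at ha ⊢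
        obtain ⟨⟨hsum, hmap⟩, h0⟩ := ha
        rw [map_tuple_succ, h0] at hmap
        have herase : Multiset.map (fun i : Fin j => a i.succ) Finset.univ.val
            = M.erase k := by
          rw [← hmap, Multiset.erase_cons_head]
        refine ⟨?_, herase⟩
        rw [sum_eq_msum, herase]
      · intro a ha
        simp only [Finset.coe_filter, Set.mem_setOf_eq, Finset.Nat.mem_antidiagonalTuple] at ha
        obtain ⟨hsum, hmap⟩ := ha
        simp only [hF, Finset.coe_filter, Set.mem_setOf_eq, Finset.mem_filter, Finset.Nat.mem_antidiagonalTuple]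
        have hcons : Multiset.map (Fin.cons k a : Fin (j+1) → ℕ) Finset.univ.val
            = M := by
          rw [map_tuple_succ]
          simp only [Fin.cons_zero, Fin.cons_succ]
          rw [hmap]
          exact Multiset.cons_erase hkM
        refine ⟨⟨?_, hcons⟩, by simp⟩
        rw [sum_eq_msum, hcons]
      · intro a ha
        simp only [Finset.coe_filter, Set.mem_setOf_eq] at ha
        funext i
        rw [← ha.2]
        exact (Fin.cons_self_tail a).symm ▸ rfl
      · intro a _
        funext i
        simp
    have halg : F.card = ∑ k ∈ M.toFinset,
        ((Finset.Nat.antidiagonalTuple j (M.erase k).sum).filter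
          (fun a => Multiset.map a Finset.univ.val = M.erase k)).card := by
      rw [hcard]
      exact Finset.sum_congr rfl hfib
    rw [halg, Finset.sum_mul]
    have hterm : ∀ k ∈ M.toFinset,
        ((Finset.Nat.antidiagonalTuple j (M.erase k).sum).filter
          (fun a => Multiset.map a Finset.univ.val = M.erase k)).card * fMult M
        = j.factorial * M.count k := by
      intro k hk
      have hkM : k ∈ M := Multiset.mem_toFinset.1 hk
      rw [fMult_erase hkM, ← Nat.mul_assoc, Nat.mul_comm _ (M.count k), Nat.mul_assoc,
        ih (M.erase k) (by rw [Multiset.card_erase_of_mem hkM, hM]; rfl)]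
      ring
    rw [Finset.sum_congr rfl hterm, ← Finset.mul_sum, Multiset.toFinset_sum_count_eq, hM]
    rw [Nat.factorial_succ]
    ring

lemma fMult_pos (M : Multiset ℕ) : 0 < fMult M :=
  Finset.prod_pos fun _ _ => Nat.factorial_pos _

end Counting

section Assembly

open Finset KrewerasAux

variable {n : ℕ}

/-- The weight of a tuple. -/
noncomputable def ww (g : ℕ → ℝ) (u : Fin (n + 1) → ℕ) : ℝ :=
  ∏ i ∈ Finset.univ.filter (fun i => u i ≠ 0), g (u i)

/-- Truncation of a tuple to a sequence. -/
def te (u : Fin (n + 1) → ℕ) : ℕ → ℕ := fun k => if h : k < n + 1 then u ⟨k, h⟩ else 0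

lemma te_eq_pu (u : Fin (n + 1) → ℕ) {k : ℕ} (hk : k < n + 1) : te u k = pu u k := by
  rw [te, dif_pos hk, pu]
  congr 1
  apply Fin.ext
  simp [Fin.val_natCast, Nat.mod_eq_of_lt hk]

lemma pre_te_eq_pu (u : Fin (n + 1) → ℕ) {i : ℕ} (hi : i ≤ n + 1) :
    pre (te u) i = pre (pu u) i := by
  unfold pre
  apply Finset.sum_congr rfl
  intro k hk
  exact te_eq_pu u (by simp at hk; omega)

lemma pre_te_total (u : Fin (n + 1) → ℕ) : pre (te u) (n + 1) = ∑ i, u i := by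
  unfold pre
  rw [← Fin.sum_univ_eq_sum_range (fun k => te u k) (n + 1)]
  apply Finset.sum_congr rfl
  intro i _
  rw [te, dif_pos i.isLt, Fin.eta]

lemma good_te (u : Fin (n + 1) → ℕ) (hu : ∑ i, u i = n) (hd : Dom u) :
    Good (te u) n := by
  have hn1 : pre (te u) (n + 1) = n := by rw [pre_te_total, hu]
  have hnn : n ≤ pre (te u) n := by
    rw [pre_te_eq_pu u (by omega)]
    exact hd n le_rfl
  have hten : te u n = 0 := by
    have := pre_succ (te u) n
    have hmono := pre_mono (te u) (le_refl n)
    omega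
  constructor
  · intro k hk
    rcases eq_or_lt_of_le hk with h | h
    · rw [← h]; exact hten
    · rw [te, dif_neg (by omega)]
  · have := pre_succ (te u) n
    omega
  · intro i hi
    rw [pre_te_eq_pu u (by omega)]
    exact hd i hi

lemma dom_tp (P : Finpartition (Finset.univ : Finset (Fin n))) :
    Dom (fun i : Fin (n + 1) => tp P i.1) := by
  intro i hi
  have : pre (pu fun i : Fin (n + 1) => tp P i.1) i = pre (tp P) i := by
    unfold pre
    apply Finset.sum_congr rfl
    intro k hk
    simp only [Finset.mem_range] at hk
    have hk1 : k < n + 1 := by omega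
    simp only [pu]
    congr 1
    simp [Fin.val_natCast, Nat.mod_eq_of_lt hk1]
  rw [this]
  exact (tp_good P).dom i hi

lemma te_tp (P : Finpartition (Finset.univ : Finset (Fin n))) :
    te (fun i : Fin (n + 1) => tp P i.1) = tp P := by
  funext k
  by_cases hk : k < n + 1
  · rw [te, dif_pos hk]
  · rw [te, dif_neg hk]
    have : tp P k = 0 := by simp only [tp]; rw [dif_neg (by omega)]
    rw [this]

lemma sum_tuple_tp (P : Finpartition (Finset.univ : Finset (Fin n))) :
    ∑ i : Fin (n + 1), tp P i.1 = n := by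
  have h1 := pre_te_total (fun i : Fin (n + 1) => tp P i.1)
  rw [te_tp] at h1
  rw [← h1, pre_succ]
  have h2 : tp P n = 0 := by simp only [tp]; rw [dif_neg (by omega)]
  rw [h2, (tp_good P).total]
  omega

/-- The noncrossing-partition sum equals the dominated-tuple sum. -/
lemma nc_sum_eq (g : ℕ → ℝ) :
    ∑ P ∈ Finset.univ.filter
        (fun P : Finpartition (Finset.univ : Finset (Fin n)) => IsNoncrossing P),
      ∏ V ∈ P.parts, g V.card
    = ∑ u ∈ (Finset.Nat.antidiagonalTuple (n + 1) n).filter (fun u => Dom u), ww g u := by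
  apply Finset.sum_bij' (i := fun P _ => (fun i : Fin (n + 1) => tp P i.1))
    (j := fun u _ => Pa (te u) n)
  · intro P hP
    simp only [Finset.mem_filter, Finset.Nat.mem_antidiagonalTuple]
    exact ⟨sum_tuple_tp P, dom_tp P⟩
  · intro u hu
    simp only [Finset.mem_filter, Finset.Nat.mem_antidiagonalTuple] at hu
    simp only [Finset.mem_filter, Finset.mem_univ, true_and]
    exact Pa_noncrossing (good_te u hu.1 hu.2)
  · intro P hP
    simp only [Finset.mem_filter, Finset.mem_univ, true_and] at hP
    rw [te_tp]
    exact Pa_tp hP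
  · intro u hu
    simp only [Finset.mem_filter, Finset.Nat.mem_antidiagonalTuple] at hu
    funext i
    rw [tp_Pa (good_te u hu.1 hu.2)]
    rw [te, dif_pos i.isLt, Fin.eta]
  · intro P hP
    exact weight_eq g P

lemma ww_rot (g : ℕ → ℝ) (u : Fin (n + 1) → ℕ) (k : ℕ) : ww g (rot k u) = ww g u := by
  apply Finset.prod_nbij' (i := fun x => x + (k : Fin (n + 1)))
    (j := fun x => x - (k : Fin (n + 1)))
  · intro x hx
    simp only [Finset.mem_filter, Finset.mem_univ, true_and] at hx ⊢
    exact hx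
  · intro x hx
    simp only [Finset.mem_filter, Finset.mem_univ, true_and] at hx ⊢
    show u (x - (k : Fin (n + 1)) + (k : Fin (n + 1))) ≠ 0
    rwa [sub_add_cancel]
  · intro x _
    simp only [add_sub_cancel_right]
  · intro x _
    simp only [sub_add_cancel]
  · intro x _
    rfl

lemma rot_mem_TT (u : Fin (n + 1) → ℕ) (k : ℕ)
    (hu : u ∈ Finset.Nat.antidiagonalTuple (n + 1) n) :
    rot k u ∈ Finset.Nat.antidiagonalTuple (n + 1) n := by
  rw [Finset.Nat.mem_antidiagonalTuple] at hu ⊢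
  rw [sum_rot]
  exact hu

/-- Cycle-lemma sum identity. -/
lemma cycle_sum (g : ℕ → ℝ) :
    ∑ u ∈ Finset.Nat.antidiagonalTuple (n + 1) n, ww g u
      = (n + 1 : ℝ) * ∑ u ∈ (Finset.Nat.antidiagonalTuple (n + 1) n).filter
          (fun u => Dom u), ww g u := by
  have step1 : ∀ u ∈ Finset.Nat.antidiagonalTuple (n + 1) n,
      ww g u = ∑ k ∈ Finset.range (n + 1), (if Dom (rot k u) then ww g u else 0) := by
    intro u hu
    rw [Finset.Nat.mem_antidiagonalTuple] at hu
    obtain ⟨K, ⟨hK1, hK2⟩, hKuniq⟩ := exists_unique_rot u hu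
    rw [Finset.sum_eq_single_of_mem K (Finset.mem_range.2 hK1)]
    · rw [if_pos hK2]
    · intro k hk hne
      rw [if_neg]
      intro hd
      exact hne (hKuniq k ⟨Finset.mem_range.1 hk, hd⟩)
  rw [Finset.sum_congr rfl step1, Finset.sum_comm]
  have step2 : ∀ k ∈ Finset.range (n + 1),
      ∑ u ∈ Finset.Nat.antidiagonalTuple (n + 1) n, (if Dom (rot k u) then ww g u else 0)
      = ∑ v ∈ Finset.Nat.antidiagonalTuple (n + 1) n, (if Dom v then ww g v else 0) := by
    intro k hk
    rw [Finset.mem_range] at hk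
    apply Finset.sum_nbij' (i := rot k) (j := rot (n + 1 - k))
    · intro u hu; exact rot_mem_TT u k hu
    · intro u hu; exact rot_mem_TT u _ hu
    · intro u _
      rw [rot_rot, show k + (n + 1 - k) = n + 1 by omega, rot_n1]
    · intro u _
      rw [rot_rot, show n + 1 - k + k = n + 1 by omega, rot_n1]
    · intro u _
      rw [ww_rot g u k]
  rw [Finset.sum_congr rfl step2, Finset.sum_const, Finset.card_range, nsmul_eq_mul]
  rw [Finset.sum_filter]
  push_cast
  ring

/-! ### Grouping by support -/

/-- The inner sum over positive tuples. -/
noncomputable def AA (g : ℕ → ℝ) (n j : ℕ) : ℝ :=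
  ∑ a ∈ (Finset.Nat.antidiagonalTuple j n).filter (fun a => ∀ r, 1 ≤ a r), ∏ r, g (a r)

lemma supp_fiber (g : ℕ → ℝ) (S : Finset (Fin (n + 1))) (hn : 1 ≤ n) :
    ∑ u ∈ (Finset.Nat.antidiagonalTuple (n + 1) n).filter
        (fun u => Finset.univ.filter (fun i => u i ≠ 0) = S), ww g u
      = AA g n S.card := by
  set e := S.orderIsoOfFin rfl with he
  rw [AA]
  apply Finset.sum_bij'
    (i := fun (u : Fin (n + 1) → ℕ) _ => (fun r : Fin S.card => u (e r).1))
    (j := fun (a : Fin S.card → ℕ) _ =>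
      (fun i : Fin (n + 1) => if h : i ∈ S then a (e.symm ⟨i, h⟩) else 0))
  · intro u hu
    simp only [Finset.mem_filter, Finset.Nat.mem_antidiagonalTuple] at hu
    obtain ⟨hsum, hsupp⟩ := hu
    have hpos : ∀ r : Fin S.card, 1 ≤ u (e r).1 := by
      intro r
      have hmem2 : (e r).1 ∈ Finset.univ.filter (fun i => u i ≠ 0) := by
        rw [hsupp]; exact (e r).2
      simp only [Finset.mem_filter] at hmem2
      omega
    refine Finset.mem_filter.2 ⟨Finset.Nat.mem_antidiagonalTuple.2 ?_, hpos⟩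
    calc ∑ r, u (e r).1 = ∑ y : {x // x ∈ S}, u y.1 :=
          Equiv.sum_comp e.toEquiv (fun y : {x // x ∈ S} => u y.1)
      _ = ∑ x ∈ S, u x := Finset.sum_coe_sort S u
      _ = ∑ x, u x := by
          apply Finset.sum_subset (Finset.subset_univ S)
          intro x _ hx
          by_contra h
          exact hx (by rw [← hsupp]; simp [h])
      _ = n := hsum
  · intro a ha
    simp only [Finset.mem_filter, Finset.Nat.mem_antidiagonalTuple] at ha
    obtain ⟨hsum, hpos⟩ := ha
    have hsupp : Finset.univ.filter
        (fun i => (if h : i ∈ S then a (e.symm ⟨i, h⟩) else 0) ≠ 0) = S := by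
      ext i
      simp only [Finset.mem_filter, Finset.mem_univ, true_and]
      by_cases h : i ∈ S
      · rw [dif_pos h]
        have := hpos (e.symm ⟨i, h⟩)
        simp [h]
        omega
      · rw [dif_neg h]
        simp [h]
    refine Finset.mem_filter.2 ⟨Finset.Nat.mem_antidiagonalTuple.2 ?_, hsupp⟩
    calc ∑ i, (if h : i ∈ S then a (e.symm ⟨i, h⟩) else 0)
        = ∑ i ∈ S, (if h : i ∈ S then a (e.symm ⟨i, h⟩) else 0) := by
          symm
          apply Finset.sum_subset (Finset.subset_univ S)
          intro x _ hx
          rw [dif_neg hx]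
      _ = ∑ y : {x // x ∈ S}, (if h : (y : Fin (n + 1)) ∈ S then a (e.symm ⟨y, h⟩) else 0) :=
          (Finset.sum_coe_sort S _).symm
      _ = ∑ y : {x // x ∈ S}, a (e.symm y) := by
          apply Finset.sum_congr rfl
          intro y _
          rw [dif_pos y.2]
      _ = ∑ r, a r := Equiv.sum_comp e.symm.toEquiv (fun r => a r)
      _ = n := hsum
  · intro u hu
    simp only [Finset.mem_filter] at hu
    funext i
    by_cases h : i ∈ S
    · rw [dif_pos h]
      show u (e (e.symm ⟨i, h⟩)).1 = u i
      rw [e.apply_symm_apply]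
    · rw [dif_neg h]
      have h2 : i ∉ Finset.univ.filter (fun i => u i ≠ 0) := by rw [hu.2]; exact h
      simp only [Finset.mem_filter, Finset.mem_univ, true_and, not_not] at h2
      exact h2.symm
  · intro a _
    funext r
    show (if h : (e r).1 ∈ S then a (e.symm ⟨(e r).1, h⟩) else 0) = a r
    rw [dif_pos (e r).2]
    congr 1
    have h3 : (⟨(e r).1, (e r).2⟩ : {x // x ∈ S}) = e r := rfl
    rw [h3, e.symm_apply_apply]
  · intro u hu
    simp only [Finset.mem_filter] at hu
    rw [ww, hu.2]
    calc ∏ x ∈ S, g (u x) = ∏ y : {x // x ∈ S}, g (u y.1) := (Finset.prod_coe_sort S _).symm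
      _ = ∏ r, g (u (e r).1) :=
          (Equiv.prod_comp e.toEquiv (fun y : {x // x ∈ S} => g (u y.1))).symm

lemma AA_zero (g : ℕ → ℝ) (hn : 1 ≤ n) : AA g n 0 = 0 := by
  rw [AA]
  convert Finset.sum_empty
  apply Finset.eq_empty_of_forall_notMem
  intro a ha
  simp only [Finset.mem_filter, Finset.Nat.mem_antidiagonalTuple] at ha
  have : (0 : ℕ) = n := by rw [← ha.1]; simp
  omega

lemma AA_large (g : ℕ → ℝ) {j : ℕ} (hj : n < j) : AA g n j = 0 := by
  rw [AA]
  convert Finset.sum_empty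
  apply Finset.eq_empty_of_forall_notMem
  intro a ha
  simp only [Finset.mem_filter, Finset.Nat.mem_antidiagonalTuple] at ha
  have : j ≤ n := by
    calc j = ∑ _r : Fin j, 1 := by simp
      _ ≤ ∑ r, a r := Finset.sum_le_sum (fun r _ => ha.2 r)
      _ = n := ha.1
  omega

lemma supp_group (g : ℕ → ℝ) (hn : 1 ≤ n) :
    ∑ u ∈ Finset.Nat.antidiagonalTuple (n + 1) n, ww g u
      = ∑ j ∈ Finset.range (n + 2), ((n + 1).choose j : ℝ) * AA g n j := by
  rw [← Finset.sum_fiberwise_of_maps_to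
    (g := fun u : Fin (n + 1) → ℕ => Finset.univ.filter (fun i => u i ≠ 0))
    (t := (Finset.univ : Finset (Fin (n + 1))).powerset)
    (fun u _ => Finset.mem_powerset.2 (Finset.filter_subset _ _)) (ww g)]
  rw [Finset.sum_congr rfl (fun S _ => supp_fiber g S hn)]
  rw [Finset.sum_powerset Finset.univ (fun S => AA g n S.card)]
  rw [Finset.card_univ, Fintype.card_fin]
  apply Finset.sum_congr rfl
  intro j _
  have : ∀ S ∈ Finset.powersetCard j (Finset.univ : Finset (Fin (n + 1))),
      AA g n S.card = AA g n j := by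
    intro S hS
    rw [(Finset.mem_powersetCard.1 hS).2]
  rw [Finset.sum_congr rfl this, Finset.sum_const, Finset.card_powersetCard,
    Finset.card_univ, Fintype.card_fin, nsmul_eq_mul]

/-! ### Sorting tuples -/

/-- Sort a tuple in decreasing order. -/
def srt {j : ℕ} (a : Fin j → ℕ) : Fin j → ℕ :=
  fun r => ((List.ofFn a).mergeSort (fun x y => decide (y ≤ x))).getD r 0

lemma length_msort {j : ℕ} (a : Fin j → ℕ) :
    ((List.ofFn a).mergeSort (fun x y => decide (y ≤ x))).length = j := by
  rw [List.length_mergeSort, List.length_ofFn]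

lemma ofFn_srt {j : ℕ} (a : Fin j → ℕ) :
    List.ofFn (srt a) = (List.ofFn a).mergeSort (fun x y => decide (y ≤ x)) := by
  apply List.ext_get
  · rw [List.length_ofFn, length_msort]
  · intro i h1 h2
    rw [List.get_ofFn]
    simp only [srt]
    rw [List.getD_eq_getElem _ _ (by rw [length_msort]; rw [List.length_ofFn] at h1; exact h1)]
    rfl

lemma msetmap_eq {j : ℕ} {α : Type*} (f : Fin j → α) :
    Multiset.map f Finset.univ.val = ↑(List.ofFn f) := by
  rw [Fin.univ_def]
  simp only
  rw [Multiset.map_coe, ← List.ofFn_eq_map]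

lemma srt_perm {j : ℕ} (a : Fin j → ℕ) :
    Multiset.map (srt a) Finset.univ.val = Multiset.map a Finset.univ.val := by
  rw [msetmap_eq, msetmap_eq, ofFn_srt, Multiset.coe_eq_coe]
  exact List.mergeSort_perm (List.ofFn a) _

lemma sorted_msort {j : ℕ} (a : Fin j → ℕ) :
    List.Pairwise (fun x y : ℕ => y ≤ x) (List.ofFn (srt a)) := by
  rw [ofFn_srt]
  have := List.pairwise_mergeSort (le := fun x y : ℕ => decide (y ≤ x))
    (fun a b c h1 h2 => by simp at h1 h2 ⊢; omega)
    (fun a b => by simp; omega) (List.ofFn a)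
  exact this.imp (fun h => of_decide_eq_true h)

lemma sorted_ofFn_iff {j : ℕ} (b : Fin j → ℕ) :
    List.Pairwise (fun x y : ℕ => y ≤ x) (List.ofFn b)
      ↔ ∀ r s : Fin j, r ≤ s → b s ≤ b r := by
  rw [List.pairwise_iff_get]
  constructor
  · intro h r s hrs
    rcases eq_or_lt_of_le hrs with heq | hlt
    · rw [heq]
    · have := h (Fin.cast List.length_ofFn.symm r) (Fin.cast List.length_ofFn.symm s)
        (by simpa using hlt)
      rwa [List.get_ofFn, List.get_ofFn] at this
  · intro h i₁ i₂ hi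
    rw [List.get_ofFn, List.get_ofFn]
    exact h _ _ (le_of_lt (by simpa using hi))

lemma srt_sorted {j : ℕ} (a : Fin j → ℕ) : ∀ r s : Fin j, r ≤ s → srt a s ≤ srt a r :=
  (sorted_ofFn_iff (srt a)).1 (sorted_msort a)

lemma srt_eq_of_sorted {j : ℕ} {a b : Fin j → ℕ}
    (hdec : ∀ r s : Fin j, r ≤ s → b s ≤ b r)
    (hperm : Multiset.map a Finset.univ.val = Multiset.map b Finset.univ.val) :
    srt a = b := by
  haveI : IsAntisymm ℕ (fun x y : ℕ => y ≤ x) := ⟨fun a b h1 h2 => le_antisymm h2 h1⟩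
  apply List.ofFn_injective
  apply List.Perm.eq_of_pairwise' (sorted_msort a) ((sorted_ofFn_iff b).2 hdec)
  rw [← Multiset.coe_eq_coe, ← msetmap_eq, ← msetmap_eq, srt_perm]
  exact hperm

lemma prod_eq_mprod {j : ℕ} (f : Fin j → ℝ) :
    ∏ r, f r = (Multiset.map f Finset.univ.val).prod := rfl

/-- Symmetrization: group positive tuples by their decreasing rearrangement. -/
lemma sym_group (g : ℕ → ℝ) (j : ℕ) :
    AA g n j = ∑ b ∈ (Finset.Nat.antidiagonalTuple j n).filter
        (fun b => (∀ r s : Fin j, r ≤ s → b s ≤ b r) ∧ ∀ r, 1 ≤ b r),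
      ((j.factorial : ℝ) / (fMult (Multiset.map b Finset.univ.val) : ℝ)) * ∏ r, g (b r) := by
  rw [AA]
  have hmaps : ∀ a ∈ (Finset.Nat.antidiagonalTuple j n).filter (fun a => ∀ r, 1 ≤ a r),
      srt a ∈ (Finset.Nat.antidiagonalTuple j n).filter
        (fun b => (∀ r s : Fin j, r ≤ s → b s ≤ b r) ∧ ∀ r, 1 ≤ b r) := by
    intro a ha
    simp only [Finset.mem_filter, Finset.Nat.mem_antidiagonalTuple] at ha ⊢
    refine ⟨?_, srt_sorted a, ?_⟩
    · rw [sum_eq_msum, srt_perm, ← sum_eq_msum]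
      exact ha.1
    · intro r
      have hmem : srt a r ∈ Multiset.map a Finset.univ.val := by
        rw [← srt_perm]
        exact Multiset.mem_map.2 ⟨r, Finset.mem_univ_val _, rfl⟩
      obtain ⟨i, _, hi⟩ := Multiset.mem_map.1 hmem
      rw [← hi]
      exact ha.2 i
  rw [← Finset.sum_fiberwise_of_maps_to hmaps]
  apply Finset.sum_congr rfl
  intro b hb
  simp only [Finset.mem_filter, Finset.Nat.mem_antidiagonalTuple] at hb
  obtain ⟨hbsum, hbdec, hbpos⟩ := hb
  set M := Multiset.map b Finset.univ.val with hM
  have hfib : ((Finset.Nat.antidiagonalTuple j n).filter (fun a => ∀ r, 1 ≤ a r)).filter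
      (fun a => srt a = b)
      = (Finset.Nat.antidiagonalTuple j n).filter
        (fun a => Multiset.map a Finset.univ.val = M) := by
    ext a
    simp only [Finset.mem_filter, Finset.Nat.mem_antidiagonalTuple]
    constructor
    · rintro ⟨⟨hsum, _⟩, hsrt⟩
      refine ⟨hsum, ?_⟩
      rw [← srt_perm, hsrt, hM]
    · rintro ⟨hsum, hmap⟩
      refine ⟨⟨hsum, ?_⟩, srt_eq_of_sorted hbdec hmap⟩
      intro r
      have hmem : a r ∈ M := by
        rw [← hmap]
        exact Multiset.mem_map.2 ⟨r, Finset.mem_univ_val _, rfl⟩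
      rw [hM] at hmem
      obtain ⟨i, _, hi⟩ := Multiset.mem_map.1 hmem
      rw [← hi]
      exact hbpos i
  have hval : ∀ a ∈ ((Finset.Nat.antidiagonalTuple j n).filter
      (fun a => ∀ r, 1 ≤ a r)).filter (fun a => srt a = b),
      (∏ r, g (a r)) = ∏ r, g (b r) := by
    intro a ha
    rw [hfib, Finset.mem_filter] at ha
    rw [prod_eq_mprod, prod_eq_mprod]
    have h1 : Multiset.map (fun r => g (a r)) Finset.univ.val
        = Multiset.map g (Multiset.map a Finset.univ.val) := by
      rw [Multiset.map_map]; rfl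
    have h2 : Multiset.map (fun r => g (b r)) Finset.univ.val
        = Multiset.map g (Multiset.map b Finset.univ.val) := by
      rw [Multiset.map_map]; rfl
    rw [h1, h2, ha.2]
  rw [Finset.sum_congr rfl hval, Finset.sum_const, hfib, nsmul_eq_mul]
  congr 1
  have hMsum : M.sum = n := by
    rw [hM, ← sum_eq_msum]
    exact hbsum
  have hMcard : Multiset.card M = j := by
    rw [hM, Multiset.card_map]
    simp
  have hcount := arr_count j M hMcard
  rw [hMsum] at hcount
  have hfne : (fMult M : ℝ) ≠ 0 := Nat.cast_ne_zero.2 (fMult_pos M).ne'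
  rw [eq_div_iff hfne]
  exact_mod_cast hcount

end Assembly

theorem free_cumulant_moment_formula (β : ℝ) (W : ℕ → ℝ) (n : ℕ) (hn : 1 ≤ n) :
    (∑ᶠ P : {P : Finpartition (Finset.univ : Finset (Fin n)) // IsNoncrossing P},
        ∏ V ∈ P.1.parts, W V.card * β ^ (V.card - 1)) =
      ∑ j ∈ Finset.Icc 1 n,
        ∑ b ∈ (Finset.Nat.antidiagonalTuple j n).filter
            (fun b => (∀ r s : Fin j, r ≤ s → b s ≤ b r) ∧ ∀ r, 1 ≤ b r),
          ((Nat.descFactorial n (j - 1) : ℝ) /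
              (fMult (Multiset.map b Finset.univ.val) : ℝ)) *
            ∏ r, W (b r) * β ^ (b r - 1) := by
  classical
  have L1 : (∑ᶠ P : {P : Finpartition (Finset.univ : Finset (Fin n)) // IsNoncrossing P},
        ∏ V ∈ P.1.parts, W V.card * β ^ (V.card - 1))
      = ∑ P ∈ Finset.univ.filter
          (fun P : Finpartition (Finset.univ : Finset (Fin n)) => IsNoncrossing P),
        ∏ V ∈ P.parts, (fun k => W k * β ^ (k - 1)) V.card := by
    rw [finsum_eq_sum_of_fintype]
    exact (Finset.sum_subtype
      (Finset.univ.filter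
        (fun P : Finpartition (Finset.univ : Finset (Fin n)) => IsNoncrossing P))
      (fun x => by simp) (fun P => ∏ V ∈ P.parts, W V.card * β ^ (V.card - 1))).symm
  rw [L1, nc_sum_eq (fun k => W k * β ^ (k - 1))]
  have hne : ((n : ℝ) + 1) ≠ 0 := by positivity
  apply mul_left_cancel₀ hne
  rw [← cycle_sum (fun k => W k * β ^ (k - 1)),
    supp_group (fun k => W k * β ^ (k - 1)) hn]
  rw [Finset.mul_sum]
  have hsub : Finset.Icc 1 n ⊆ Finset.range (n + 2) := by
    intro j hj
    simp only [Finset.mem_Icc] at hj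
    simp only [Finset.mem_range]
    omega
  have hzero : ∀ j ∈ Finset.range (n + 2), j ∉ Finset.Icc 1 n →
      ((n + 1).choose j : ℝ) * AA (fun k => W k * β ^ (k - 1)) n j = 0 := by
    intro j hj hj2
    simp only [Finset.mem_range] at hj
    simp only [Finset.mem_Icc] at hj2
    push_neg at hj2
    rcases Nat.eq_zero_or_pos j with h | h
    · rw [h, AA_zero _ hn]
      ring
    · have : n < j := hj2 h
      rw [AA_large _ this]
      ring
  rw [← Finset.sum_subset hsub hzero]
  apply Finset.sum_congr rfl
  intro j hj
  simp only [Finset.mem_Icc] at hj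
  rw [sym_group (fun k => W k * β ^ (k - 1)) j, Finset.mul_sum, Finset.mul_sum]
  apply Finset.sum_congr rfl
  intro b _
  have hnum : ((n + 1).choose j : ℝ) * (j.factorial : ℝ)
      = ((n : ℝ) + 1) * (n.descFactorial (j - 1) : ℝ) := by
    have h1 : (n + 1).descFactorial j = j.factorial * (n + 1).choose j :=
      Nat.descFactorial_eq_factorial_mul_choose _ _
    have hj1 : j = (j - 1) + 1 := by omega
    have h2 : (n + 1).descFactorial ((j - 1) + 1) = (n + 1) * n.descFactorial (j - 1) :=
      Nat.succ_descFactorial_succ n (j - 1)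
    rw [← hj1] at h2
    rw [h2] at h1
    have := congrArg (Nat.cast : ℕ → ℝ) h1
    push_cast at this
    linarith [this]
  set fM := (fMult (Multiset.map b Finset.univ.val) : ℝ) with hfM
  set Pb := ∏ r, W (b r) * β ^ (b r - 1) with hPb
  calc ((n + 1).choose j : ℝ) * ((j.factorial : ℝ) / fM * Pb)
      = (((n + 1).choose j : ℝ) * (j.factorial : ℝ)) / fM * Pb := by ring
    _ = (((n : ℝ) + 1) * (n.descFactorial (j - 1) : ℝ)) / fM * Pb := by rw [hnum]
    _ = ((n : ℝ) + 1) * ((n.descFactorial (j - 1) : ℝ) / fM * Pb) := by ring
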